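/- Let ℍ be the real quaternions with the inner product ⟨p,q⟩ = Re(p · conj(q)), and let Im ℍ denote the 3-dimensional subspace of purely imaginary quaternions. Then for every 2-dimensional real linear subspace V of ℍ there exists a purely imaginary quaternion p with |p| = 1 such that V·p = V, and moreover for every purely imaginary quaternion q with |q| = 1 and q orthogonal to p, the subspace V·q = { v·q : v ∈ V } is orthogonal to V. -/

import Mathlib

open Quaternion
open scoped RealInnerProductSpace

lemma aux_range_pair {α : Type*} (x y : α) : Set.range ![x, y] = {x, y} := by
  ext z; simp [Matrix.range_cons, Matrix.range_empty, or_comm]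

lemma aux_re_mul_comm (a b : Quaternion ℝ) : (a * b).re = (b * a).re := by
  simp [Quaternion.re_mul]; ring

lemma aux_star_of_im (p : Quaternion ℝ) (hp : p.re = 0) : star p = -p := by
  ext <;> simp [hp]

lemma aux_normSq_one (p : Quaternion ℝ) (hn : ‖p‖ = 1) : normSq p = 1 := by
  have := Quaternion.normSq_eq_norm_mul_self (a := p)
  rw [hn] at this; simpa using this

lemma aux_imu_sq (p : Quaternion ℝ) (hp : p.re = 0) (hn : ‖p‖ = 1) : p * p = -1 := by
  have hs : star p = -p := aux_star_of_im p hp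
  have h : p * star p = 1 := by
    rw [Quaternion.self_mul_star, aux_normSq_one p hn]; simp
  rw [hs] at h
  linear_combination (norm := noncomm_ring) -h

lemma aux_re_sandwich (a x : Quaternion ℝ) :
    (a * x * star a).re = normSq a * x.re := by
  rw [aux_re_mul_comm, ← mul_assoc, Quaternion.star_mul_self]
  simp [Quaternion.re_mul]

/-- Every 2-dimensional real linear subspace `V` of the quaternions is totally complex:
there is a purely imaginary unit quaternion `p` with `V·p = V`, and for every purely
imaginary unit quaternion `q` orthogonal to `p` the subspace `V·q` is orthogonal
to `V`. -/
theorem two_dim_subspace_totally_complex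
    (V : Submodule ℝ (Quaternion ℝ)) (hV : Module.finrank ℝ V = 2) :
    ∃ p : Quaternion ℝ, p.re = 0 ∧ ‖p‖ = 1 ∧
      Submodule.map (LinearMap.mulRight ℝ p) V = V ∧
      ∀ q : Quaternion ℝ, q.re = 0 → ‖q‖ = 1 → ⟪p, q⟫ = 0 →
        ∀ v ∈ V, ∀ w ∈ V, ⟪v * q, w⟫ = 0 := by
  -- extract an orthonormal basis a, b of V
  obtain ⟨a, b, haV, hbV, hna, hnb, hab, hspan⟩ :
      ∃ a b : Quaternion ℝ, a ∈ V ∧ b ∈ V ∧ ‖a‖ = 1 ∧ ‖b‖ = 1 ∧ ⟪a, b⟫ = 0 ∧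
        V = Submodule.span ℝ {a, b} := by
    have : FiniteDimensional ℝ V := FiniteDimensional.of_finrank_pos (by omega)
    let B := (stdOrthonormalBasis ℝ V).reindex (finCongr hV)
    have horth : Orthonormal ℝ (fun i => ((B i : V) : Quaternion ℝ)) := by
      constructor
      · intro i
        have := B.orthonormal.1 i
        rwa [Submodule.norm_coe]
      · intro i j hij
        exact B.orthonormal.2 (i := i) (j := j) hij
    refine ⟨B 0, B 1, (B 0).2, (B 1).2, horth.1 0, horth.1 1, horth.2 (by decide), ?_⟩
    have hli : LinearIndependent ℝ ![(B 0 : Quaternion ℝ), (B 1 : Quaternion ℝ)] := by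
      have hli' := horth.linearIndependent
      have he : ![(B 0 : Quaternion ℝ), (B 1 : Quaternion ℝ)] =
          (fun i => ((B i : V) : Quaternion ℝ)) := by
        funext i; fin_cases i <;> rfl
      rw [he]; exact hli'
    have hsp : Submodule.span ℝ {(B 0 : Quaternion ℝ), (B 1 : Quaternion ℝ)} ≤ V := by
      rw [Submodule.span_le]
      rintro x (rfl | rfl)
      exacts [(B 0).2, (B 1).2]
    have hfr : Module.finrank ℝ (Submodule.span ℝ
        {(B 0 : Quaternion ℝ), (B 1 : Quaternion ℝ)}) = 2 := by
      rw [← aux_range_pair, finrank_span_eq_card hli]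
      simp
    exact (Submodule.eq_of_le_of_finrank_le hsp (by rw [hfr, hV])).symm
  -- define p := star a * b
  set p : Quaternion ℝ := star a * b with hp_def
  have hp_re : p.re = 0 := by
    have h1 : (a * star b).re = 0 := by rwa [Quaternion.inner_def] at hab
    have h2 : (star a * b).re = (a * star b).re := by
      rw [aux_re_mul_comm]
      have h3 : b * star a = star (a * star b) := by simp
      rw [h3, Quaternion.re_star]
    rw [hp_def, h2, h1]
  have hp_norm : ‖p‖ = 1 := by
    rw [hp_def, norm_mul, Quaternion.norm_star, hna, hnb, one_mul]
  have hnsa : normSq a = 1 := aux_normSq_one a hna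
  have hap : a * p = b := by
    rw [hp_def, ← mul_assoc, Quaternion.self_mul_star, hnsa]
    simp
  have hbp : b * p = -a := by
    rw [← hap, mul_assoc, aux_imu_sq p hp_re hp_norm]
    simp
  refine ⟨p, hp_re, hp_norm, ?_, ?_⟩
  · -- V · p = V
    rw [hspan, Submodule.map_span]
    have himg : (LinearMap.mulRight ℝ p) '' {a, b} = {b, -a} := by
      rw [Set.image_insert_eq, Set.image_singleton]
      simp only [LinearMap.mulRight_apply, hap, hbp]
    rw [himg]
    apply le_antisymm <;>
      rw [Submodule.span_le, Set.insert_subset_iff, Set.singleton_subset_iff]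
    · exact ⟨Submodule.subset_span (by simp),
        Submodule.neg_mem _ (Submodule.subset_span (by simp))⟩
    · refine ⟨?_, Submodule.subset_span (by simp)⟩
      have h4 : -(-a) ∈ Submodule.span ℝ ({b, -a} : Set (Quaternion ℝ)) :=
        Submodule.neg_mem _ (Submodule.subset_span (by simp))
      simpa using h4
  · -- orthogonality
    intro q hq_re hq_norm hpq v hv w hw
    have hsq : star q = -q := aux_star_of_im q hq_re
    have hpq_re : (p * q).re = 0 := by
      have h := hpq
      rw [Quaternion.inner_def, hsq, mul_neg, Quaternion.re_neg, neg_eq_zero] at h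
      exact h
    -- the four basic inner products
    have key1 : ⟪a * q, a⟫ = 0 := by
      rw [Quaternion.inner_def, aux_re_sandwich, hq_re, mul_zero]
    have key2 : ⟪a * q, b⟫ = 0 := by
      rw [Quaternion.inner_def, ← hap, star_mul, ← mul_assoc, mul_assoc a q,
        aux_re_sandwich]
      have h5 : (q * star p).re = 0 := by
        rw [aux_star_of_im p hp_re, mul_neg, Quaternion.re_neg, aux_re_mul_comm,
          hpq_re, neg_zero]
      rw [h5, mul_zero]
    have key3 : ⟪b * q, a⟫ = 0 := by
      rw [Quaternion.inner_def, ← hap, mul_assoc a p q, aux_re_sandwich, hpq_re,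
        mul_zero]
    have key4 : ⟪b * q, b⟫ = 0 := by
      rw [Quaternion.inner_def, ← hap, star_mul, ← mul_assoc, mul_assoc (a*p) q,
        mul_assoc a p, ← mul_assoc p q, aux_re_sandwich, aux_re_sandwich, hq_re]
      ring
    -- expand v and w
    rw [hspan] at hv hw
    obtain ⟨c, d, rfl⟩ := Submodule.mem_span_pair.mp hv
    obtain ⟨e, f, rfl⟩ := Submodule.mem_span_pair.mp hw
    have hexp : (c • a + d • b) * q = c • (a * q) + d • (b * q) := by
      rw [add_mul, smul_mul_assoc, smul_mul_assoc]
    rw [hexp]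
    simp only [inner_add_left, inner_add_right, real_inner_smul_left,
      real_inner_smul_right, key1, key2, key3, key4]
    ring
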